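/- arXiv:2009.03183 — 2 statements merged into one kernel-verified Lean document; each statement's English description precedes it below -/
import Mathlib

section
/- For any measurable function f with f(X) of positive finite variance, ρ(f(X), Y) ≤ σ_{E(Y|X)} / σ_Y = ρ(E(Y|X), Y), where σ denotes standard deviation. Consequently E(Y|X) (up to positive affine transformation) maximizes the Pearson correlation with Y over all measurable transformations of X. -/
open MeasureTheory ProbabilityTheory

/-- Covariance of two real random variables: `Cov(U,V) = E(UV) - E(U)E(V)`. -/
noncomputable def cov {Ω : Type*} [MeasurableSpace Ω] (μ : Measure Ω) (U V : Ω → ℝ) : ℝ :=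
  (∫ ω, U ω * V ω ∂μ) - (∫ ω, U ω ∂μ) * (∫ ω, V ω ∂μ)

/-- Pearson correlation coefficient `ρ(U,V) = Cov(U,V)/(σ_U σ_V)`. -/
noncomputable def pearson {Ω : Type*} [MeasurableSpace Ω] (μ : Measure Ω) (U V : Ω → ℝ) : ℝ :=
  cov μ U V / (Real.sqrt (variance U μ) * Real.sqrt (variance V μ))

lemma my_integrable_mul {Ω : Type*} [MeasurableSpace Ω] {μ : Measure Ω} {U V : Ω → ℝ}
    (hU : MemLp U 2 μ) (hV : MemLp V 2 μ) : Integrable (fun ω => U ω * V ω) μ := by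
  rw [← memLp_one_iff_integrable]
  exact hV.smul (φ := U) hU (r := 1) (hpqr := ⟨by simp [ENNReal.inv_two_add_inv_two, one_div]⟩)

lemma cov_le_sqrt_var {Ω : Type*} [MeasurableSpace Ω] {μ : Measure Ω} [IsProbabilityMeasure μ]
    {U V : Ω → ℝ} (hU : MemLp U 2 μ) (hV : MemLp V 2 μ) :
    cov μ U V ≤ Real.sqrt (variance U μ) * Real.sqrt (variance V μ) := by
  set a := ∫ ω, U ω ∂μ with ha
  set b := ∫ ω, V ω ∂μ with hb
  have hUc : MemLp (fun ω => U ω - a) 2 μ := hU.sub (memLp_const a)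
  have hVc : MemLp (fun ω => V ω - b) 2 μ := hV.sub (memLp_const b)
  set u : Lp ℝ 2 μ := hUc.toLp _ with hu_def
  set v : Lp ℝ 2 μ := hVc.toLp _ with hv_def
  have hu : (u : Ω → ℝ) =ᵐ[μ] fun ω => U ω - a := hUc.coeFn_toLp
  have hv : (v : Ω → ℝ) =ᵐ[μ] fun ω => V ω - b := hVc.coeFn_toLp
  have hinner : ∀ (W T : Ω → ℝ) (w t : Lp ℝ 2 μ), (w : Ω → ℝ) =ᵐ[μ] W → (t : Ω → ℝ) =ᵐ[μ] T →
      (inner ℝ w t : ℝ) = ∫ ω, W ω * T ω ∂μ := by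
    intro W T w t hw ht
    rw [MeasureTheory.L2.inner_def]
    refine integral_congr_ae ?_
    filter_upwards [hw, ht] with ω h1 h2
    rw [h1, h2]
    simp [RCLike.inner_apply, mul_comm]
  have hcov : cov μ U V = ∫ ω, (U ω - a) * (V ω - b) ∂μ := by
    have h1 : ∫ ω, (U ω - a) * (V ω - b) ∂μ
        = ∫ ω, (U ω * V ω - (a * V ω + b * U ω) + a * b) ∂μ := by
      congr 1; ext ω; ring
    rw [h1, integral_add, integral_sub, integral_add, integral_const_mul, integral_const_mul,
      integral_const]
    · simp only [cov, probReal_univ, measure_univ, ENNReal.toReal_one, smul_eq_mul, one_mul, ← ha, ← hb]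
      ring
    · exact (hV.integrable one_le_two).const_mul a
    · exact (hU.integrable one_le_two).const_mul b
    · exact my_integrable_mul hU hV
    · exact ((hV.integrable one_le_two).const_mul a).add ((hU.integrable one_le_two).const_mul b)
    · exact (my_integrable_mul hU hV).sub
        (((hV.integrable one_le_two).const_mul a).add ((hU.integrable one_le_two).const_mul b))
    · exact integrable_const _
  have hnorm : ∀ (W : Ω → ℝ) (w : Lp ℝ 2 μ), (w : Ω → ℝ) =ᵐ[μ] W →
      MemLp W 2 μ → (heq : W = fun ω => W ω) →
      ∫ ω, W ω * W ω ∂μ = ‖w‖ * ‖w‖ := by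
    intro W w hw _ _
    rw [← hinner W W w w hw hw, real_inner_self_eq_norm_mul_norm]
  have hvaru : variance U μ = ‖u‖ * ‖u‖ := by
    rw [variance_eq_integral hU.aemeasurable, ← hnorm _ u hu hUc rfl]
    refine integral_congr_ae (ae_of_all μ fun ω => ?_)
    simp [sq, ha]
  have hvarv : variance V μ = ‖v‖ * ‖v‖ := by
    rw [variance_eq_integral hV.aemeasurable, ← hnorm _ v hv hVc rfl]
    refine integral_congr_ae (ae_of_all μ fun ω => ?_)
    simp [sq, hb]
  have hsu : Real.sqrt (variance U μ) = ‖u‖ := by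
    rw [hvaru, Real.sqrt_mul_self (norm_nonneg _)]
  have hsv : Real.sqrt (variance V μ) = ‖v‖ := by
    rw [hvarv, Real.sqrt_mul_self (norm_nonneg _)]
  rw [hcov, hsu, hsv, ← hinner _ _ u v hu hv]
  exact real_inner_le_norm u v

/-- `ρ(f(X), Y) ≤ σ_{E(Y|X)}/σ_Y = ρ(E(Y|X), Y)` for every measurable `f` with `f(X)` of
positive finite variance. -/
theorem pearson_le_condexp_pearson {Ω : Type*} [MeasurableSpace Ω] (μ : Measure Ω)
    [IsProbabilityMeasure μ] (X Y : Ω → ℝ) (hX : Measurable X) (hYm : Measurable Y)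
    (hY : MemLp Y 2 μ) (hYvar : 0 < variance Y μ)
    (hEvar : 0 < variance (μ[Y | MeasurableSpace.comap X inferInstance]) μ)
    (f : ℝ → ℝ) (hf : Measurable f) (hfX : MemLp (fun ω => f (X ω)) 2 μ)
    (hfvar : 0 < variance (fun ω => f (X ω)) μ) :
    pearson μ (fun ω => f (X ω)) Y
        ≤ Real.sqrt (variance (μ[Y | MeasurableSpace.comap X inferInstance]) μ)
            / Real.sqrt (variance Y μ) ∧
      Real.sqrt (variance (μ[Y | MeasurableSpace.comap X inferInstance]) μ)
          / Real.sqrt (variance Y μ)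
        = pearson μ (μ[Y | MeasurableSpace.comap X inferInstance]) Y := by
  have hm : MeasurableSpace.comap X inferInstance ≤ ‹MeasurableSpace Ω› :=
    measurable_iff_comap_le.mp hX
  haveI : SigmaFinite (μ.trim hm) := inferInstance
  set Z := μ[Y | MeasurableSpace.comap X inferInstance] with hZ_def
  -- Z ∈ L²
  have hZmem : MemLp Z 2 μ := by
    have hae : (↑↑((condExpL2 ℝ ℝ hm (hY.toLp Y)) : Lp ℝ 2 μ) : Ω → ℝ) =ᵐ[μ] Z := by
      refine ae_eq_condExp_of_forall_setIntegral_eq hm (hY.integrable one_le_two) ?_ ?_ ?_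
      · intro s _ hμs
        exact integrableOn_condExpL2_of_measure_ne_top hm hμs.ne _
      · intro s hs hμs
        rw [integral_condExpL2_eq hm (hY.toLp Y) hs hμs.ne]
        exact setIntegral_congr_ae (hm s hs) (hY.coeFn_toLp.mono fun x hx _ => hx)
      · exact aestronglyMeasurable_condExpL2 hm _
    exact (Lp.memLp _).ae_eq hae
  -- pull-out property
  have key : ∀ (W : Ω → ℝ), StronglyMeasurable[MeasurableSpace.comap X inferInstance] W →
      MemLp W 2 μ → ∫ ω, W ω * Y ω ∂μ = ∫ ω, W ω * Z ω ∂μ := by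
    intro W hWm hW2
    have h1 : Integrable (W * Y) μ := my_integrable_mul hW2 hY
    have h2 := condExp_mul_of_stronglyMeasurable_left hWm h1 (hY.integrable one_le_two)
    calc ∫ ω, W ω * Y ω ∂μ
        = ∫ ω, (μ[W * Y | MeasurableSpace.comap X inferInstance]) ω ∂μ :=
          (integral_condExp hm).symm
      _ = ∫ ω, (W * Z) ω ∂μ := integral_congr_ae h2
      _ = ∫ ω, W ω * Z ω ∂μ := rfl
  have hfXm : StronglyMeasurable[MeasurableSpace.comap X inferInstance] (fun ω => f (X ω)) :=
    (hf.comp (Measurable.of_comap_le le_rfl)).stronglyMeasurable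
  have hEZ : ∫ ω, Z ω ∂μ = ∫ ω, Y ω ∂μ := integral_condExp hm
  have hcov1 : cov μ (fun ω => f (X ω)) Y = cov μ (fun ω => f (X ω)) Z := by
    simp only [cov]
    rw [key _ hfXm hfX, hEZ]
  have hcov2 : cov μ Z Y = variance Z μ := by
    rw [variance_eq_sub hZmem]
    simp only [cov]
    rw [key Z stronglyMeasurable_condExp hZmem, ← hEZ]
    congr 1
    · refine integral_congr_ae (ae_of_all μ fun ω => ?_)
      simp [sq]
    · rw [sq]
  have hsf : 0 < Real.sqrt (variance (fun ω => f (X ω)) μ) := Real.sqrt_pos.2 hfvar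
  have hsy : 0 < Real.sqrt (variance Y μ) := Real.sqrt_pos.2 hYvar
  have hsz : 0 < Real.sqrt (variance Z μ) := Real.sqrt_pos.2 hEvar
  constructor
  · simp only [pearson]
    rw [hcov1, div_le_div_iff₀ (by positivity) hsy]
    have hCS := cov_le_sqrt_var hfX hZmem
    nlinarith [hsf, hsy, hsz, mul_le_mul_of_nonneg_right hCS hsy.le]
  · simp only [pearson]
    rw [hcov2, div_eq_div_iff hsy.ne' (mul_pos hsz hsy).ne']
    nlinarith [Real.sq_sqrt (variance_nonneg Z μ), hsz, hsy]
end

section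
/- Let Y ~ N(μ, σ²), let U be Bernoulli(1/2) independent of Y, and set X = arctan(Y²) + Uπ. Then E(1_{Y>0} | Y²) = P_Y(|Y|)/(P_Y(|Y|) + P_Y(-|Y|)) almost surely, where P_Y is the Gaussian density of Y; equivalently, 2·E(1_{Y>0}|X) - 1 = tanh((μ/σ²)·√(tan X)). -/
open MeasureTheory ProbabilityTheory Real
open scoped NNReal ENNReal

/-- Density of the Gaussian distribution `N(m, s²)`. -/
noncomputable def gpdf (m s y : ℝ) : ℝ :=
  (1 / (s * Real.sqrt (2 * Real.pi))) * Real.exp (-(y - m) ^ 2 / (2 * s ^ 2))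

noncomputable def Grat (m σ y : ℝ) : ℝ :=
  gpdf m σ |y| / (gpdf m σ |y| + gpdf m σ (-|y|))

lemma gpdf_pos {m σ : ℝ} (hσ : 0 < σ) (y : ℝ) : 0 < gpdf m σ y := by
  unfold gpdf
  have h2 : (0:ℝ) < Real.sqrt (2 * Real.pi) := Real.sqrt_pos.mpr (by positivity)
  positivity

lemma gpdf_eq {m σ : ℝ} (hσ : 0 < σ) (y : ℝ) :
    gaussianPDFReal m ⟨σ ^ 2, sq_nonneg σ⟩ y = gpdf m σ y := by
  unfold gaussianPDFReal gpdf
  change (√(2 * π * σ ^ 2))⁻¹ * rexp (-(y - m) ^ 2 / (2 * σ ^ 2)) = _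
  congr 1
  rw [show (2 * π * σ ^ 2 : ℝ) = (2 * π) * σ ^ 2 by ring, Real.sqrt_mul (by positivity),
    Real.sqrt_sq hσ.le, one_div, mul_comm]

lemma ratio_tanh {m σ : ℝ} (hσ : 0 < σ) (y : ℝ) :
    gpdf m σ y / (gpdf m σ y + gpdf m σ (-y)) = (Real.tanh (m / σ ^ 2 * y) + 1) / 2 := by
  have h2 : (0:ℝ) < Real.sqrt (2 * Real.pi) := Real.sqrt_pos.mpr (by positivity)
  have hCpos : (0:ℝ) <
      (1 / (σ * Real.sqrt (2 * Real.pi))) * Real.exp (-(y ^ 2 + m ^ 2) / (2 * σ ^ 2)) := by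
    positivity
  have h1 : gpdf m σ y =
      ((1 / (σ * Real.sqrt (2 * Real.pi))) * Real.exp (-(y ^ 2 + m ^ 2) / (2 * σ ^ 2))) *
        Real.exp (m / σ ^ 2 * y) := by
    unfold gpdf
    rw [mul_assoc, ← Real.exp_add]
    congr 1
    field_simp
    ring
  have h2' : gpdf m σ (-y) =
      ((1 / (σ * Real.sqrt (2 * Real.pi))) * Real.exp (-(y ^ 2 + m ^ 2) / (2 * σ ^ 2))) *
        Real.exp (-(m / σ ^ 2 * y)) := by
    unfold gpdf
    rw [mul_assoc, ← Real.exp_add]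
    congr 1
    field_simp
    ring
  rw [h1, h2', Real.tanh_eq_sinh_div_cosh, Real.sinh_eq, Real.cosh_eq]
  have hepos : (0:ℝ) < Real.exp (m / σ ^ 2 * y) + Real.exp (-(m / σ ^ 2 * y)) := by positivity
  field_simp
  ring

lemma gpdf_continuous (m σ : ℝ) : Continuous (gpdf m σ) := by
  unfold gpdf
  fun_prop

lemma Grat_continuous (m σ : ℝ) (hσ : 0 < σ) : Continuous (Grat m σ) := by
  unfold Grat
  refine Continuous.div ?_ ?_ ?_
  · exact (gpdf_continuous m σ).comp continuous_abs
  · exact ((gpdf_continuous m σ).comp continuous_abs).add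
      ((gpdf_continuous m σ).comp continuous_abs.neg)
  · intro x
    exact (add_pos (gpdf_pos hσ _) (gpdf_pos hσ _)).ne'

lemma Grat_nonneg {m σ : ℝ} (hσ : 0 < σ) (y : ℝ) : 0 ≤ Grat m σ y :=
  div_nonneg (gpdf_pos hσ _).le (add_pos (gpdf_pos hσ _) (gpdf_pos hσ _)).le

lemma Grat_le_one {m σ : ℝ} (hσ : 0 < σ) (y : ℝ) : Grat m σ y ≤ 1 := by
  rw [Grat, div_le_one (add_pos (gpdf_pos hσ _) (gpdf_pos hσ _))]
  linarith [gpdf_pos (m := m) hσ (-|y|)]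

lemma Grat_neg (m σ y : ℝ) : Grat m σ (-y) = Grat m σ y := by rw [Grat, Grat, abs_neg]

lemma Grat_mul {m σ : ℝ} (hσ : 0 < σ) {y : ℝ} (hy : 0 ≤ y) :
    (gpdf m σ y + gpdf m σ (-y)) * Grat m σ y = gpdf m σ y := by
  rw [Grat, abs_of_nonneg hy, mul_comm]
  exact div_mul_cancel₀ _ (add_pos (gpdf_pos hσ _) (gpdf_pos hσ _)).ne'

lemma vne {σ : ℝ} (hσ : 0 < σ) : (⟨σ ^ 2, sq_nonneg σ⟩ : ℝ≥0) ≠ 0 := by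
  intro h
  have := congrArg (fun t : ℝ≥0 => (t : ℝ)) h
  change σ ^ 2 = 0 at this
  exact (pow_pos hσ 2).ne' this

lemma int_nu {m σ : ℝ} (hσ : 0 < σ) (g : ℝ → ℝ) :
    ∫ y, g y ∂(gaussianReal m ⟨σ ^ 2, sq_nonneg σ⟩)
      = ∫ y, gaussianPDFReal m ⟨σ ^ 2, sq_nonneg σ⟩ y * g y := by
  rw [gaussianReal_of_var_ne_zero _ (vne hσ)]
  have h1 : gaussianPDF m ⟨σ ^ 2, sq_nonneg σ⟩
      = fun x => ((Real.toNNReal (gaussianPDFReal m ⟨σ ^ 2, sq_nonneg σ⟩ x) : ℝ≥0) : ℝ≥0∞) :=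
    rfl
  rw [h1]
  erw [integral_withDensity_eq_integral_smul
    ((measurable_gaussianPDFReal m _).real_toNNReal) g]
  congr 1
  ext x
  erw [NNReal.smul_def, Real.coe_toNNReal _ (gaussianPDFReal_nonneg _ _ _), smul_eq_mul]

lemma ind_norm_le (B : Set ℝ) (t : ℝ) : ‖B.indicator (1 : ℝ → ℝ) t‖ ≤ 1 := by
  by_cases h : t ∈ B <;> simp [Set.indicator_of_mem, Set.indicator_of_notMem, h]

lemma bd_helper {p t : ℝ} (hp : 0 ≤ p) (ht : ‖t‖ ≤ 1) : ‖p * t‖ ≤ p := by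
  rw [norm_mul, Real.norm_of_nonneg hp]
  calc p * ‖t‖ ≤ p * 1 := by gcongr
    _ = p := mul_one p

lemma core {m σ : ℝ} (hσ : 0 < σ) {B : Set ℝ} (hB : MeasurableSet B) :
    ∫ y, (if 0 < y then (1:ℝ) else 0) * B.indicator 1 (y ^ 2)
        ∂(gaussianReal m ⟨σ ^ 2, sq_nonneg σ⟩)
      = ∫ y, Grat m σ y * B.indicator 1 (y ^ 2) ∂(gaussianReal m ⟨σ ^ 2, sq_nonneg σ⟩) := by
  rw [int_nu hσ, int_nu hσ]
  set p : ℝ → ℝ := gaussianPDFReal m ⟨σ ^ 2, sq_nonneg σ⟩ with hp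
  set F : ℝ → ℝ := fun y => p y * ((if 0 < y then (1:ℝ) else 0) * B.indicator 1 (y ^ 2))
    with hF
  set Gf : ℝ → ℝ := fun y => p y * (Grat m σ y * B.indicator 1 (y ^ 2)) with hGf
  have hpm : Measurable p := measurable_gaussianPDFReal m _
  have hindm : Measurable (fun y : ℝ => B.indicator (1 : ℝ → ℝ) (y ^ 2)) :=
    (measurable_one.indicator hB).comp (measurable_id.pow_const 2)
  have hifm : Measurable (fun y : ℝ => if 0 < y then (1:ℝ) else 0) :=
    Measurable.ite measurableSet_Ioi measurable_const measurable_const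
  have hFm : Measurable F := hpm.mul (hifm.mul hindm)
  have hGm : Measurable Gf := hpm.mul (((Grat_continuous m σ hσ).measurable).mul hindm)
  have hFbd : ∀ y, ‖F y‖ ≤ p y := by
    intro y
    refine bd_helper (gaussianPDFReal_nonneg _ _ _) ?_
    have h1 : ‖if 0 < y then (1:ℝ) else 0‖ ≤ 1 := by split_ifs <;> simp
    calc ‖(if 0 < y then (1:ℝ) else 0) * B.indicator (1:ℝ→ℝ) (y ^ 2)‖
        = ‖if 0 < y then (1:ℝ) else 0‖ * ‖B.indicator (1:ℝ→ℝ) (y ^ 2)‖ := norm_mul _ _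
      _ ≤ 1 := mul_le_one₀ h1 (norm_nonneg _) (ind_norm_le _ _)
  have hGbd : ∀ y, ‖Gf y‖ ≤ p y := by
    intro y
    refine bd_helper (gaussianPDFReal_nonneg _ _ _) ?_
    have h1 : ‖Grat m σ y‖ ≤ 1 := by
      rw [Real.norm_of_nonneg (Grat_nonneg hσ y)]; exact Grat_le_one hσ y
    calc ‖Grat m σ y * B.indicator (1:ℝ→ℝ) (y ^ 2)‖
        = ‖Grat m σ y‖ * ‖B.indicator (1:ℝ→ℝ) (y ^ 2)‖ := norm_mul _ _
      _ ≤ 1 := mul_le_one₀ h1 (norm_nonneg _) (ind_norm_le _ _)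
  have hpint : Integrable p := integrable_gaussianPDFReal m _
  have hFi : Integrable F := hpint.mono' hFm.aestronglyMeasurable (ae_of_all _ hFbd)
  have hGi : Integrable Gf := hpint.mono' hGm.aestronglyMeasurable (ae_of_all _ hGbd)
  have hmp := Measure.measurePreserving_neg (volume : Measure ℝ)
  have hFnegi : Integrable (fun y => F (-y)) :=
    (hmp.integrable_comp_emb measurableEmbedding_neg).mpr hFi
  have hGnegi : Integrable (fun y => Gf (-y)) :=
    (hmp.integrable_comp_emb measurableEmbedding_neg).mpr hGi
  have hFneg : ∫ y, F (-y) = ∫ y, F y := hmp.integral_comp measurableEmbedding_neg F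
  have hGneg : ∫ y, Gf (-y) = ∫ y, Gf y := hmp.integral_comp measurableEmbedding_neg Gf
  have hne : ∀ᵐ y : ℝ, y ≠ 0 := by
    rw [ae_iff]
    have : {y : ℝ | ¬ y ≠ 0} = {0} := by ext y; simp
    rw [this]
    exact Real.volume_singleton
  have key : ∀ y : ℝ, y ≠ 0 → F y + F (-y) = Gf y + Gf (-y) := by
    intro y hy
    have hsq : (-y) ^ 2 = y ^ 2 := by ring
    rcases hy.lt_or_gt with h | h
    · simp only [hF, hGf, if_neg (not_lt.mpr h.le), if_pos (neg_pos.mpr h),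
        hsq, hp, gpdf_eq hσ, zero_mul, mul_zero, zero_add, one_mul, Grat_neg]
      have hmul := Grat_mul (m := m) hσ (neg_nonneg.mpr h.le)
      rw [neg_neg, Grat_neg] at hmul
      linear_combination -B.indicator (1:ℝ→ℝ) (y ^ 2) * hmul
    · simp only [hF, hGf, if_pos h, if_neg (not_lt.mpr (neg_nonpos.mpr h.le)),
        hsq, hp, gpdf_eq hσ, zero_mul, mul_zero, add_zero, one_mul, Grat_neg]
      have hmul := Grat_mul (m := m) hσ h.le
      linear_combination -B.indicator (1:ℝ→ℝ) (y ^ 2) * hmul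
  have hmain : ∫ y, (F y + F (-y)) = ∫ y, (Gf y + Gf (-y)) :=
    integral_congr_ae (hne.mono fun y hy => key y hy)
  rw [integral_add hFi hFnegi, integral_add hGi hGnegi, hFneg, hGneg] at hmain
  linarith

lemma split_int {Ω : Type*} [MeasurableSpace Ω] (μ : Measure Ω) [IsProbabilityMeasure μ]
    (Y U : Ω → ℝ) (hYm : Measurable Y) (hUm : Measurable U)
    (ν : Measure ℝ) [IsProbabilityMeasure ν] (hY : μ.map Y = ν)
    (hU : μ.map U = (1/2 : ℝ≥0∞) • Measure.dirac (0 : ℝ) + (1/2 : ℝ≥0∞) • Measure.dirac 1)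
    (hindep : IndepFun U Y μ)
    (g : ℝ → ℝ) (hg : Measurable g) (hgb : ∀ y, ‖g y‖ ≤ 1)
    (A : Set ℝ) (hA : MeasurableSet A) :
    ∫ ω, g (Y ω) * A.indicator 1 (Real.arctan ((Y ω) ^ 2) + U ω * Real.pi) ∂μ
      = (2⁻¹ : ℝ) * ∫ y, g y * A.indicator 1 (Real.arctan (y ^ 2)) ∂ν
        + (2⁻¹ : ℝ) * ∫ y, g y * A.indicator 1 (Real.arctan (y ^ 2) + Real.pi) ∂ν := by
  set H : ℝ × ℝ → ℝ := fun z => g z.2 * A.indicator 1 (Real.arctan (z.2 ^ 2) + z.1 * Real.pi)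
    with hH
  have hHm : Measurable H := by
    apply (hg.comp measurable_snd).mul
    exact (measurable_one.indicator hA).comp
      (((Real.continuous_arctan.measurable).comp ((measurable_snd).pow_const 2)).add
        (measurable_fst.mul_const _))
  have hHb : ∀ z, ‖H z‖ ≤ 1 := by
    intro z
    rw [hH]
    calc ‖g z.2 * A.indicator 1 (Real.arctan (z.2 ^ 2) + z.1 * Real.pi)‖
        = ‖g z.2‖ * ‖A.indicator (1:ℝ→ℝ) (Real.arctan (z.2 ^ 2) + z.1 * Real.pi)‖ :=
          norm_mul _ _
      _ ≤ 1 := by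
          refine mul_le_one₀ (hgb _) (norm_nonneg _) ?_
          by_cases h : (Real.arctan (z.2 ^ 2) + z.1 * Real.pi) ∈ A <;>
            simp [Set.indicator_of_mem, Set.indicator_of_notMem, h]
  have hmap : μ.map (fun ω => (U ω, Y ω)) = (μ.map U).prod (μ.map Y) :=
    (indepFun_iff_map_prod_eq_prod_map_map hUm.aemeasurable hYm.aemeasurable).mp hindep
  have hL : ∫ ω, g (Y ω) * A.indicator 1 (Real.arctan ((Y ω) ^ 2) + U ω * Real.pi) ∂μ
      = ∫ z, H z ∂((μ.map U).prod (μ.map Y)) := by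
    rw [← hmap, integral_map (hUm.prodMk hYm).aemeasurable hHm.aestronglyMeasurable]
  rw [hL, hY]
  haveI : IsProbabilityMeasure (μ.map U) := Measure.isProbabilityMeasure_map hUm.aemeasurable
  have hHi : Integrable H ((μ.map U).prod ν) :=
    (integrable_const (1:ℝ)).mono' hHm.aestronglyMeasurable (ae_of_all _ hHb)
  rw [integral_prod _ hHi, hU]
  have hfm : StronglyMeasurable fun x : ℝ => ∫ y, H (x, y) ∂ν :=
    hHm.stronglyMeasurable.integral_prod_right'
  have hint0 : Integrable (fun x : ℝ => ∫ y, H (x, y) ∂ν) (Measure.dirac (0:ℝ)) := by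
    refine (integrable_const (1:ℝ)).mono' hfm.aestronglyMeasurable (ae_of_all _ fun x => ?_)
    calc ‖∫ y, H (x, y) ∂ν‖ ≤ ∫ y, ‖H (x, y)‖ ∂ν := norm_integral_le_integral_norm _
      _ ≤ ∫ _, (1:ℝ) ∂ν := by
          refine integral_mono_of_nonneg (ae_of_all _ fun y => norm_nonneg _)
            (integrable_const 1) (ae_of_all _ fun y => hHb _)
      _ = 1 := by simp
  have hint1 : Integrable (fun x : ℝ => ∫ y, H (x, y) ∂ν) (Measure.dirac (1:ℝ)) := by
    refine (integrable_const (1:ℝ)).mono' hfm.aestronglyMeasurable (ae_of_all _ fun x => ?_)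
    calc ‖∫ y, H (x, y) ∂ν‖ ≤ ∫ y, ‖H (x, y)‖ ∂ν := norm_integral_le_integral_norm _
      _ ≤ ∫ _, (1:ℝ) ∂ν := by
          refine integral_mono_of_nonneg (ae_of_all _ fun y => norm_nonneg _)
            (integrable_const 1) (ae_of_all _ fun y => hHb _)
      _ = 1 := by simp
  rw [integral_add_measure (hint0.smul_measure (by norm_num)) (hint1.smul_measure (by norm_num)),
    integral_smul_measure, integral_smul_measure,
    integral_dirac' _ _ hfm, integral_dirac' _ _ hfm]
  have h0 : ∀ y : ℝ, H (0, y) = g y * A.indicator 1 (Real.arctan (y ^ 2)) := by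
    intro y; rw [hH]; simp
  have h1 : ∀ y : ℝ, H (1, y) = g y * A.indicator 1 (Real.arctan (y ^ 2) + Real.pi) := by
    intro y; rw [hH]; simp
  simp only [h0, h1]
  norm_num [ENNReal.toReal_div]

lemma Grat_abs (m σ y : ℝ) : Grat m σ |y| = Grat m σ y := by rw [Grat, Grat, abs_abs]

lemma setIntegral_preimage {Ω : Type*} [MeasurableSpace Ω] (μ : Measure Ω) (Z : Ω → ℝ)
    (hZ : Measurable Z) {A : Set ℝ} (hA : MeasurableSet A) (φ : Ω → ℝ) :
    ∫ x in Z ⁻¹' A, φ x ∂μ = ∫ x, φ x * A.indicator 1 (Z x) ∂μ := by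
  rw [← integral_indicator (hZ hA)]
  congr 1
  ext x
  by_cases h : Z x ∈ A
  · simp [Set.indicator_of_mem, h, Set.mem_preimage, Set.indicator_of_mem (Set.mem_preimage.mpr h)]
  · simp [Set.indicator_of_notMem, h, Set.indicator_of_notMem (fun hx => h hx)]

lemma measurable_tanh' : Measurable Real.tanh := by
  have : Real.tanh = fun x => Real.sinh x / Real.cosh x :=
    funext fun x => Real.tanh_eq_sinh_div_cosh x
  rw [this]
  exact Real.continuous_sinh.measurable.div Real.continuous_cosh.measurable

lemma measurable_tan' : Measurable Real.tan := by
  have : Real.tan = fun x => Real.sin x / Real.cos x := funext fun x => Real.tan_eq_sin_div_cos x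
  rw [this]
  exact Real.measurable_sin.div Real.measurable_cos

/-- With `Y ~ N(m, σ²)`, `U ~ Bernoulli(1/2)` independent of `Y`, and
`X = arctan(Y²) + Uπ`, we have `E(1_{Y>0} | Y²) = P_Y(|Y|)/(P_Y(|Y|)+P_Y(-|Y|))` a.s.;
equivalently `2·E(1_{Y>0}|X) - 1 = tanh((m/σ²)·√(tan X))` a.s. -/
theorem condexp_indicator_pos_eq {Ω : Type*} [MeasurableSpace Ω] (μ : Measure Ω)
    [IsProbabilityMeasure μ] (Y U : Ω → ℝ) (m σ : ℝ) (hσ : 0 < σ)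
    (hYm : Measurable Y) (hUm : Measurable U)
    (hY : μ.map Y = gaussianReal m ⟨σ ^ 2, sq_nonneg σ⟩)
    (hU : μ.map U = (1/2 : ℝ≥0∞) • Measure.dirac (0 : ℝ) + (1/2 : ℝ≥0∞) • Measure.dirac 1)
    (hindep : IndepFun U Y μ)
    (X : Ω → ℝ) (hX : X = fun ω => Real.arctan ((Y ω) ^ 2) + U ω * Real.pi) :
    (μ[(fun ω => if 0 < Y ω then (1 : ℝ) else 0) |
          MeasurableSpace.comap (fun ω => (Y ω) ^ 2) inferInstance]
        =ᵐ[μ] fun ω => gpdf m σ |Y ω| / (gpdf m σ |Y ω| + gpdf m σ (-|Y ω|))) ∧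
      ((fun ω => 2 * (μ[(fun ω' => if 0 < Y ω' then (1 : ℝ) else 0) |
            MeasurableSpace.comap X inferInstance]) ω - 1)
        =ᵐ[μ] fun ω => Real.tanh ((m / σ ^ 2) * Real.sqrt (Real.tan (X ω)))) := by
  have hνP : IsProbabilityMeasure (gaussianReal m ⟨σ ^ 2, sq_nonneg σ⟩) :=
    instIsProbabilityMeasureGaussianReal m _
  -- basic measurability / integrability
  have hifm : Measurable (fun y : ℝ => if 0 < y then (1:ℝ) else 0) :=
    Measurable.ite measurableSet_Ioi measurable_const measurable_const
  have hifb : ∀ y : ℝ, ‖(if 0 < y then (1:ℝ) else 0)‖ ≤ 1 := by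
    intro y; split_ifs <;> simp
  have hGb : ∀ y : ℝ, ‖Grat m σ y‖ ≤ 1 := by
    intro y; rw [Real.norm_of_nonneg (Grat_nonneg hσ y)]; exact Grat_le_one hσ y
  have hGm : Measurable (Grat m σ) := (Grat_continuous m σ hσ).measurable
  have hfm : Measurable (fun ω => if 0 < Y ω then (1:ℝ) else 0) := hifm.comp hYm
  have hfi : Integrable (fun ω => if 0 < Y ω then (1:ℝ) else 0) μ :=
    (integrable_const (1:ℝ)).mono' hfm.aestronglyMeasurable (ae_of_all _ fun ω => hifb (Y ω))
  have hgi : Integrable (fun ω => Grat m σ (Y ω)) μ :=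
    (integrable_const (1:ℝ)).mono' (hGm.comp hYm).aestronglyMeasurable
      (ae_of_all _ fun ω => hGb (Y ω))
  have hmapint : ∀ G : ℝ → ℝ, Measurable G →
      ∫ ω, G (Y ω) ∂μ = ∫ y, G y ∂(gaussianReal m ⟨σ ^ 2, sq_nonneg σ⟩) := by
    intro G hG
    rw [← hY, integral_map hYm.aemeasurable hG.aestronglyMeasurable]
  have hindm : ∀ {A : Set ℝ}, MeasurableSet A →
      Measurable (fun t : ℝ => A.indicator (1 : ℝ → ℝ) t) := fun hA =>
    measurable_one.indicator hA
  -- Part 1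
  have hm1 : MeasurableSpace.comap (fun ω => (Y ω) ^ 2) inferInstance ≤ _ :=
    (hYm.pow_const 2).comap_le
  have hcond1 : (fun ω => Grat m σ (Y ω)) =ᵐ[μ]
      μ[(fun ω => if 0 < Y ω then (1 : ℝ) else 0) |
        MeasurableSpace.comap (fun ω => (Y ω) ^ 2) inferInstance] := by
    refine ae_eq_condExp_of_forall_setIntegral_eq hm1 hfi
      (fun s _ _ => hgi.integrableOn) ?_ ?_
    · rintro s ⟨A, hA, rfl⟩ _
      rw [setIntegral_preimage μ _ (hYm.pow_const 2) hA,
        setIntegral_preimage μ _ (hYm.pow_const 2) hA]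
      have h1 := hmapint (fun y => Grat m σ y * A.indicator 1 (y ^ 2))
        (hGm.mul ((hindm hA).comp (measurable_id.pow_const 2)))
      have h2 := hmapint (fun y => (if 0 < y then (1:ℝ) else 0) * A.indicator 1 (y ^ 2))
        (hifm.mul ((hindm hA).comp (measurable_id.pow_const 2)))
      exact h1.trans ((core hσ hA).symm.trans h2.symm)
    · refine ⟨fun ω => Grat m σ (Real.sqrt ((Y ω) ^ 2)), ?_, ae_of_all _ fun ω => ?_⟩
      · have hZcm : Measurable[MeasurableSpace.comap (fun ω => (Y ω) ^ 2) inferInstance]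
            (fun ω => (Y ω) ^ 2) := Measurable.of_comap_le le_rfl
        exact ((hGm.comp Real.continuous_sqrt.measurable).comp hZcm).stronglyMeasurable
      · show Grat m σ (Y ω) = Grat m σ (Real.sqrt ((Y ω) ^ 2))
        rw [Real.sqrt_sq_eq_abs, Grat_abs]
  constructor
  · filter_upwards [hcond1] with ω h
    rw [← h]
    rfl
  -- Part 2
  · have hXm : Measurable X := by
      rw [hX]
      exact (Real.continuous_arctan.measurable.comp (hYm.pow_const 2)).add (hUm.mul_const _)
    have hU01 : ∀ᵐ ω ∂μ, U ω = 0 ∨ U ω = 1 := by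
      have hSm : MeasurableSet ({0, 1} : Set ℝ)ᶜ :=
        (MeasurableSet.insert (measurableSet_singleton 1) 0).compl
      have h0 : μ.map U ({0, 1} : Set ℝ)ᶜ = 0 := by
        rw [hU]
        simp only [Measure.coe_add, Measure.coe_smul, Pi.add_apply, Pi.smul_apply,
          Measure.dirac_apply' _ hSm]
        have h00 : (0:ℝ) ∈ ({0, 1} : Set ℝ) := by simp
        have h11 : (1:ℝ) ∈ ({0, 1} : Set ℝ) := by simp
        rw [Set.indicator_of_notMem (by simp), Set.indicator_of_notMem (by simp)]
        simp
      rw [Measure.map_apply hUm hSm] at h0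
      rw [ae_iff]
      convert h0 using 2
      ext ω; simp
    have htan : ∀ᵐ ω ∂μ, Real.tan (X ω) = (Y ω) ^ 2 := by
      filter_upwards [hU01] with ω h
      rw [hX]
      show Real.tan (Real.arctan ((Y ω) ^ 2) + U ω * Real.pi) = (Y ω) ^ 2
      rcases h with h | h
      · simp [h, Real.tan_arctan]
      · rw [h, one_mul, Real.tan_periodic, Real.tan_arctan]
    have haeΦ : ∀ᵐ ω ∂μ, Grat m σ (Y ω)
        = (Real.tanh ((m / σ ^ 2) * Real.sqrt (Real.tan (X ω))) + 1) / 2 := by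
      filter_upwards [htan] with ω h
      rw [h, Real.sqrt_sq_eq_abs, ← Grat_abs m σ (Y ω), Grat]
      rw [abs_abs]
      exact ratio_tanh hσ |Y ω|
    have hcond2 : (fun ω => Grat m σ (Y ω)) =ᵐ[μ]
        μ[(fun ω' => if 0 < Y ω' then (1 : ℝ) else 0) |
          MeasurableSpace.comap X inferInstance] := by
      refine ae_eq_condExp_of_forall_setIntegral_eq hXm.comap_le hfi
        (fun s _ _ => hgi.integrableOn) ?_ ?_
      · rintro s ⟨A, hA, rfl⟩ _
        rw [setIntegral_preimage μ _ hXm hA, setIntegral_preimage μ _ hXm hA]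
        subst hX
        have s1 := split_int μ Y U hYm hUm _ hY hU hindep (Grat m σ) hGm hGb A hA
        have s2 := split_int μ Y U hYm hUm _ hY hU hindep
          (fun y => if 0 < y then (1:ℝ) else 0) hifm hifb A hA
        have e0 : ∀ y : ℝ, A.indicator (1:ℝ→ℝ) (Real.arctan (y ^ 2))
            = (Real.arctan ⁻¹' A).indicator 1 (y ^ 2) := by
          intro y
          by_cases h : Real.arctan (y ^ 2) ∈ A <;>
            simp [Set.indicator_apply, Set.mem_preimage, h]
        have e1 : ∀ y : ℝ, A.indicator (1:ℝ→ℝ) (Real.arctan (y ^ 2) + Real.pi)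
            = ((fun t => Real.arctan t + Real.pi) ⁻¹' A).indicator 1 (y ^ 2) := by
          intro y
          by_cases h : Real.arctan (y ^ 2) + Real.pi ∈ A <;>
            simp [Set.indicator_apply, Set.mem_preimage, h]
        have c0 := core (m := m) hσ (Real.continuous_arctan.measurable hA)
        have c1 := core (m := m) hσ
          ((Real.continuous_arctan.measurable.add_const Real.pi) hA)
        refine s1.trans (Eq.trans ?_ s2.symm)
        simp only [e0, e1]
        rw [c0, c1]
      · refine ⟨fun ω => (Real.tanh ((m / σ ^ 2) * Real.sqrt (Real.tan (X ω))) + 1) / 2,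
          ?_, haeΦ⟩
        have hXcm : Measurable[MeasurableSpace.comap X inferInstance] X :=
          Measurable.of_comap_le le_rfl
        have hΦm : Measurable (fun x : ℝ =>
            (Real.tanh ((m / σ ^ 2) * Real.sqrt (Real.tan x)) + 1) / 2) := by
          refine Measurable.div_const (Measurable.add_const ?_ 1) 2
          exact measurable_tanh'.comp
            ((Real.continuous_sqrt.measurable.comp measurable_tan').const_mul _)
        exact (hΦm.comp hXcm).stronglyMeasurable
    filter_upwards [hcond2, haeΦ] with ω h1 h2
    rw [← h1, h2]
    ring
end
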